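/- Let N₁, N₂ be C¹ norms on ℝⁿ with strictly convex unit spheres, pᵢ = ∇Nᵢ, and let ν be a nonzero vector. For each x with N₁(x) = 1 and x·ν ≥ 0, there is at most one m with N₂(m) = 1, m·ν ≥ 0, and p₂(m) − p₁(x) parallel to ν. -/

import Mathlib

open RealInnerProductSpace

/-- Convexity of a norm-like function. -/
lemma auxN_convexOn {n : ℕ} (N : EuclideanSpace ℝ (Fin n) → ℝ)
    (hadd : ∀ x y, N (x + y) ≤ N x + N y)
    (hsmul : ∀ (c : ℝ) x, N (c • x) = |c| * N x) :
    ConvexOn ℝ Set.univ N := by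
  refine ⟨convex_univ, fun x _ y _ a b ha hb hab => ?_⟩
  calc N (a • x + b • y) ≤ N (a • x) + N (b • y) := hadd _ _
    _ = a * N x + b * N y := by
        rw [hsmul, hsmul, abs_of_nonneg ha, abs_of_nonneg hb]

/-- Euler + support: gradient of a 1-homogeneous convex function at a unit point. -/
lemma auxN_key {n : ℕ} (N : EuclideanSpace ℝ (Fin n) → ℝ)
    (hadd : ∀ x y, N (x + y) ≤ N x + N y)
    (hsmul : ∀ (c : ℝ) x, N (c • x) = |c| * N x)
    (p m : EuclideanSpace ℝ (Fin n))
    (hp : HasGradientAt N p m) (hm : N m = 1) :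
    ⟪p, m⟫ = 1 ∧ ∀ w, ⟪p, w⟫ ≤ N w := by
  have hF : HasFDerivAt N (InnerProductSpace.toDual ℝ _ p) m :=
    hasGradientAt_iff_hasFDerivAt.mp hp
  -- Euler
  have heuler : ⟪p, m⟫ = 1 := by
    have hline : HasDerivAt (fun t : ℝ => t • m) m 1 := by
      simpa using (hasDerivAt_id (1 : ℝ)).smul_const m
    have h1 : HasDerivAt (fun t : ℝ => N (t • m)) ⟪p, m⟫ 1 := by
      have hF' : HasFDerivAt N (InnerProductSpace.toDual ℝ _ p) ((1:ℝ) • m) := by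
        simpa using hF
      have := hF'.comp_hasDerivAt (1 : ℝ) hline
      simpa [InnerProductSpace.toDual_apply_apply, Function.comp_def] using this
    have h2 : HasDerivAt (fun t : ℝ => t * N m) ⟪p, m⟫ 1 := by
      apply h1.congr_of_eventuallyEq
      filter_upwards [eventually_gt_nhds (show (0:ℝ) < 1 by norm_num)] with t ht
      rw [hsmul, abs_of_pos ht]
    have h3 : HasDerivAt (fun t : ℝ => t * N m) (N m) 1 := by
      simpa using (hasDerivAt_id (1 : ℝ)).mul_const (N m)
    have := h2.unique h3
    rw [this, hm]
  refine ⟨heuler, fun w => ?_⟩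
  set g : ℝ → ℝ := fun t => N (m + t • (w - m)) with hg
  have hconv : ConvexOn ℝ Set.univ g := by
    refine ⟨convex_univ, fun s _ t _ a b ha hb hab => ?_⟩
    have hb' : b = 1 - a := by linarith
    subst hb'
    have harg : m + (a • s + (1 - a) • t) • (w - m)
        = a • (m + s • (w - m)) + (1 - a) • (m + t • (w - m)) := by
      simp only [smul_eq_mul]
      module
    simp only [hg, harg]
    exact (auxN_convexOn N hadd hsmul).2 (Set.mem_univ _) (Set.mem_univ _) ha hb hab
  have hderiv : HasDerivAt g ⟪p, w - m⟫ 0 := by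
    have hline : HasDerivAt (fun t : ℝ => m + t • (w - m)) (w - m) 0 := by
      simpa using ((hasDerivAt_id (0 : ℝ)).smul_const (w - m)).const_add m
    have hF' : HasFDerivAt N (InnerProductSpace.toDual ℝ _ p) (m + (0:ℝ) • (w - m)) := by
      simpa using hF
    have := hF'.comp_hasDerivAt (0 : ℝ) hline
    simpa [InnerProductSpace.toDual_apply_apply, Function.comp_def] using this
  have hslope := hconv.le_slope_of_hasDerivAt (Set.mem_univ (0:ℝ)) (Set.mem_univ (1:ℝ))
    zero_lt_one hderiv
  have hg0 : g 0 = 1 := by simp [hg, hm]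
  have hg1 : g 1 = N w := by simp [hg]
  rw [slope_def_field, hg0, hg1] at hslope
  have : ⟪p, w - m⟫ ≤ N w - 1 := by
    simpa using hslope
  rw [inner_sub_right] at this
  linarith [heuler, this]

/-- Strict support inequality. -/
lemma auxN_strict {n : ℕ} (N : EuclideanSpace ℝ (Fin n) → ℝ)
    (hadd : ∀ x y, N (x + y) ≤ N x + N y)
    (hsmul : ∀ (c : ℝ) x, N (c • x) = |c| * N x)
    (hstrict : ∀ x y, N x = 1 → N y = 1 → x ≠ y →
      ∀ t : ℝ, 0 < t → t < 1 → N (t • x + (1 - t) • y) < 1)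
    (p m y : EuclideanSpace ℝ (Fin n))
    (hp : HasGradientAt N p m) (hm : N m = 1) (hy : N y = 1) (hne : m ≠ y) :
    ⟪p, y⟫ < 1 := by
  obtain ⟨heuler, hsupp⟩ := auxN_key N hadd hsmul p m hp hm
  have hz : N ((1/2 : ℝ) • m + (1 - 1/2 : ℝ) • y) < 1 :=
    hstrict m y hm hy hne (1/2) (by norm_num) (by norm_num)
  have hz2 := hsupp ((1/2 : ℝ) • m + (1 - 1/2 : ℝ) • y)
  rw [inner_add_right, inner_smul_right, inner_smul_right, heuler] at hz2
  norm_num at hz hz2 ⊢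
  linarith
theorem stmt5 {n : ℕ} (N₁ N₂ : EuclideanSpace ℝ (Fin n) → ℝ)
    (hN₁_add : ∀ x y, N₁ (x + y) ≤ N₁ x + N₁ y)
    (hN₁_smul : ∀ (c : ℝ) x, N₁ (c • x) = |c| * N₁ x)
    (hN₁_pos : ∀ x, x ≠ 0 → 0 < N₁ x)
    (hN₂_add : ∀ x y, N₂ (x + y) ≤ N₂ x + N₂ y)
    (hN₂_smul : ∀ (c : ℝ) x, N₂ (c • x) = |c| * N₂ x)
    (hN₂_pos : ∀ x, x ≠ 0 → 0 < N₂ x)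
    (hstrict₁ : ∀ x y, N₁ x = 1 → N₁ y = 1 → x ≠ y →
      ∀ t : ℝ, 0 < t → t < 1 → N₁ (t • x + (1 - t) • y) < 1)
    (hstrict₂ : ∀ x y, N₂ x = 1 → N₂ y = 1 → x ≠ y →
      ∀ t : ℝ, 0 < t → t < 1 → N₂ (t • x + (1 - t) • y) < 1)
    (p₁ p₂ : EuclideanSpace ℝ (Fin n) → EuclideanSpace ℝ (Fin n))
    (hp₁ : ∀ x, x ≠ 0 → HasGradientAt N₁ (p₁ x) x)
    (hp₂ : ∀ x, x ≠ 0 → HasGradientAt N₂ (p₂ x) x)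
    (ν : EuclideanSpace ℝ (Fin n)) (hν : ν ≠ 0)
    (x : EuclideanSpace ℝ (Fin n)) (hx : N₁ x = 1) (hxν : 0 ≤ ⟪x, ν⟫)
    (m₁ m₂ : EuclideanSpace ℝ (Fin n))
    (hm₁ : N₂ m₁ = 1) (hm₁ν : 0 ≤ ⟪m₁, ν⟫)
    (hpar₁ : ∃ lam : ℝ, p₂ m₁ - p₁ x = lam • ν)
    (hm₂ : N₂ m₂ = 1) (hm₂ν : 0 ≤ ⟪m₂, ν⟫)
    (hpar₂ : ∃ lam : ℝ, p₂ m₂ - p₁ x = lam • ν) :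
    m₁ = m₂ := by
  by_contra hne
  have hm₁0 : m₁ ≠ 0 := by
    intro h; rw [h] at hm₁
    have : N₂ (0 : EuclideanSpace ℝ (Fin n)) = 0 := by
      have := hN₂_smul 0 0; simpa using this
    rw [this] at hm₁; norm_num at hm₁
  have hm₂0 : m₂ ≠ 0 := by
    intro h; rw [h] at hm₂
    have : N₂ (0 : EuclideanSpace ℝ (Fin n)) = 0 := by
      have := hN₂_smul 0 0; simpa using this
    rw [this] at hm₂; norm_num at hm₂
  obtain ⟨lam₁, h₁⟩ := hpar₁
  obtain ⟨lam₂, h₂⟩ := hpar₂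
  have hdiff : p₂ m₁ - p₂ m₂ = (lam₁ - lam₂) • ν := by
    have : p₂ m₁ - p₂ m₂ = (p₂ m₁ - p₁ x) - (p₂ m₂ - p₁ x) := by abel
    rw [this, h₁, h₂, sub_smul]
  have e11 : ⟪p₂ m₁, m₁⟫ = 1 :=
    (auxN_key N₂ hN₂_add hN₂_smul (p₂ m₁) m₁ (hp₂ m₁ hm₁0) hm₁).1
  have e22 : ⟪p₂ m₂, m₂⟫ = 1 :=
    (auxN_key N₂ hN₂_add hN₂_smul (p₂ m₂) m₂ (hp₂ m₂ hm₂0) hm₂).1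
  have e12 : ⟪p₂ m₁, m₂⟫ < 1 :=
    auxN_strict N₂ hN₂_add hN₂_smul hstrict₂ (p₂ m₁) m₁ m₂ (hp₂ m₁ hm₁0) hm₁ hm₂ hne
  have e21 : ⟪p₂ m₂, m₁⟫ < 1 :=
    auxN_strict N₂ hN₂_add hN₂_smul hstrict₂ (p₂ m₂) m₂ m₁ (hp₂ m₂ hm₂0) hm₂ hm₁
      (Ne.symm hne)
  have hm₁ν' : 0 ≤ ⟪ν, m₁⟫ := by rw [real_inner_comm]; exact hm₁ν
  have hm₂ν' : 0 ≤ ⟪ν, m₂⟫ := by rw [real_inner_comm]; exact hm₂ν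
  have key1 : 0 < (lam₁ - lam₂) * ⟪ν, m₁⟫ := by
    have h := congrArg (fun v => ⟪v, m₁⟫) hdiff
    simp only [inner_sub_left, real_inner_smul_left] at h
    rw [e11] at h
    linarith [h, e21]
  have key2 : (lam₁ - lam₂) * ⟪ν, m₂⟫ < 0 := by
    have h := congrArg (fun v => ⟪v, m₂⟫) hdiff
    simp only [inner_sub_left, real_inner_smul_left] at h
    rw [e22] at h
    linarith [h, e12]
  rcases le_or_gt 0 (lam₁ - lam₂) with hl | hl
  · exact absurd key2 (not_lt.mpr (mul_nonneg hl hm₂ν'))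
  · exact absurd key1 (not_lt.mpr (mul_nonpos_of_nonpos_of_nonneg hl.le hm₁ν'))
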